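/- Define P : ℂ → ℂ by P(z) := (Σ_{ζ∈ℂ, ζ³=1} ζ·e^{2Re(ζz)}) / (Σ_{ζ∈ℂ, ζ³=1} e^{2Re(ζz)}), where both sums run over the three cube roots of unity. Then the range of P is exactly the set {v ∈ ℂ | for every ζ ∈ ℂ with ζ³ = 1, 2·Re(ζv) > −1}, which is the interior of the (closed) triangle in ℂ with vertices the three cube roots of unity 1, e^{2πi/3}, e^{4πi/3}. -/

import Mathlib

/-- The radial projection to the affine chart `ℂ × {1}` of the Ţiţeica affine sphere:
`P(z)` is the quotient of `∑_{ζ³=1} ζ e^{2 Re(ζ z)}` by `∑_{ζ³=1} e^{2 Re(ζ z)}`,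
the sums running over the three cube roots of unity. -/
noncomputable def titP (z : ℂ) : ℂ :=
  ((Polynomial.nthRoots 3 (1 : ℂ)).map fun ζ => ζ * (Real.exp (2 * (ζ * z).re) : ℂ)).sum /
    ((Polynomial.nthRoots 3 (1 : ℂ)).map fun ζ => (Real.exp (2 * (ζ * z).re) : ℂ)).sum

open Polynomial

/-- `w1` is the primitive cube root of unity `e^{2πi/3}`. -/
noncomputable def w1 : ℂ := ⟨-(1/2), Real.sqrt 3 / 2⟩
/-- `w2` is the primitive cube root of unity `e^{4πi/3}`. -/
noncomputable def w2 : ℂ := ⟨-(1/2), -(Real.sqrt 3 / 2)⟩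

lemma sq3 : Real.sqrt 3 * Real.sqrt 3 = 3 := Real.mul_self_sqrt (by norm_num)

lemma hw_add : w1 + w2 = -1 := by
  simp [w1, w2, Complex.ext_iff]; norm_num

lemma hw_mul : w1 * w2 = 1 := by
  simp [w1, w2, Complex.ext_iff, Complex.mul_re, Complex.mul_im]
  constructor <;> nlinarith [sq3]

lemma hq1 : w1 ^ 2 + w1 + 1 = 0 := by linear_combination w1 * hw_add - hw_mul
lemma hq2 : w2 ^ 2 + w2 + 1 = 0 := by linear_combination w2 * hw_add - hw_mul

lemma cube_iff (ζ : ℂ) : ζ ^ 3 = 1 ↔ ζ = 1 ∨ ζ = w1 ∨ ζ = w2 := by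
  constructor
  · intro h
    have key : (ζ - 1) * ((ζ - w1) * (ζ - w2)) = 0 := by
      have : (ζ - 1) * ((ζ - w1) * (ζ - w2)) =
          ζ^3 - (1 + (w1 + w2)) * ζ^2 + (w1*w2 + (w1+w2)) * ζ - w1*w2 := by ring
      rw [this, hw_add, hw_mul, h]; ring
    rcases mul_eq_zero.1 key with h1 | h2
    · left; linear_combination h1
    rcases mul_eq_zero.1 h2 with h1 | h1
    · right; left; linear_combination h1
    · right; right; linear_combination h1
  · rintro (rfl | rfl | rfl)
    · norm_num
    · linear_combination (w1 - 1) * hq1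
    · linear_combination (w2 - 1) * hq2

lemma nthRoots_three : Polynomial.nthRoots 3 (1 : ℂ) = {1, w1, w2} := by
  have hfac : (X ^ 3 - C 1 : ℂ[X]) = (X - C 1) * ((X - C w1) * (X - C w2)) := by
    have : (X - C 1) * ((X - C w1) * (X - C w2)) =
        X^3 - C (1 + (w1 + w2)) * X^2 + C (w1*w2 + (w1+w2)) * X - C (w1*w2) := by
      simp only [C_add, C_mul, C_1]; ring
    rw [this, hw_add, hw_mul]
    simp
  rw [Polynomial.nthRoots, hfac, Polynomial.roots_mul, Polynomial.roots_mul,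
    Polynomial.roots_X_sub_C, Polynomial.roots_X_sub_C, Polynomial.roots_X_sub_C]
  · rfl
  · exact mul_ne_zero (X_sub_C_ne_zero w1) (X_sub_C_ne_zero w2)
  · exact mul_ne_zero (X_sub_C_ne_zero 1) (mul_ne_zero (X_sub_C_ne_zero w1) (X_sub_C_ne_zero w2))

lemma titP_eq (z : ℂ) : titP z =
    ((Real.exp (2 * z.re) : ℂ) + w1 * Real.exp (2 * (w1 * z).re) + w2 * Real.exp (2 * (w2 * z).re)) /
    ((Real.exp (2 * z.re) : ℂ) + Real.exp (2 * (w1 * z).re) + Real.exp (2 * (w2 * z).re)) := by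
  unfold titP
  rw [nthRoots_three]
  simp [Multiset.insert_eq_cons]
  ring_nf

lemma titP_core (ζ : ℂ) (a b c : ℝ) (ha : 0 < a) (hb : 0 < b) (hc : 0 < c)
    (hζ : ζ = 1 ∨ ζ = w1 ∨ ζ = w2) :
    -1 < 2 * (ζ * (((a : ℂ) + w1 * b + w2 * c) / ((a : ℂ) + b + c))).re := by
  have hd : ((a : ℂ) + b + c) = ((a + b + c : ℝ) : ℂ) := by push_cast; ring
  have hdpos : (0:ℝ) < a + b + c := by linarith
  rw [hd, ← mul_div_assoc, Complex.div_ofReal_re, ← mul_div_assoc, lt_div_iff₀ hdpos]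
  rcases hζ with rfl | rfl | rfl <;>
    simp [w1, w2, Complex.mul_re, Complex.mul_im] <;> nlinarith [sq3]

lemma titP_mem (z ζ : ℂ) (hζ : ζ ^ 3 = 1) : -1 < 2 * (ζ * titP z).re := by
  rw [titP_eq]
  exact titP_core ζ _ _ _ (Real.exp_pos _) (Real.exp_pos _) (Real.exp_pos _) ((cube_iff ζ).1 hζ)

lemma titP_surj (v : ℂ) (h1 : -1 < 2 * v.re) (h2 : -1 < 2 * (w1 * v).re)
    (h3 : -1 < 2 * (w2 * v).re) : ∃ z : ℂ, titP z = v := by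
  set s := Real.sqrt 3 with hs
  set x := v.re
  set y := v.im
  have hx2 : (w1 * v).re = -x/2 - s/2 * y := by
    simp [w1, Complex.mul_re]; ring
  have hx3 : (w2 * v).re = -x/2 + s/2 * y := by
    simp [w2, Complex.mul_re]; ring
  set u0 := (1 + 2*x)/3 with hu0def
  set u1 := (1 - x + s*y)/3 with hu1def
  set u2 := (1 - x - s*y)/3 with hu2def
  have hu0 : 0 < u0 := by rw [hu0def]; linarith
  have hu1 : 0 < u1 := by rw [hu1def]; rw [hx3] at h3; linarith
  have hu2 : 0 < u2 := by rw [hu2def]; rw [hx2] at h2; linarith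
  set t0 := Real.log u0
  set t1 := Real.log u1
  set t2 := Real.log u2
  set T := t0 + t1 + t2 with hT
  refine ⟨⟨(t0 - t1/2 - t2/2)/3, s*(t2 - t1)/6⟩, ?_⟩
  rw [titP_eq]
  have e0 : 2 * (⟨(t0 - t1/2 - t2/2)/3, s*(t2 - t1)/6⟩ : ℂ).re = t0 + -(T/3) := by
    simp [hT]; ring
  have e1 : 2 * (w1 * ⟨(t0 - t1/2 - t2/2)/3, s*(t2 - t1)/6⟩).re = t1 + -(T/3) := by
    simp [w1, Complex.mul_re, hT]
    linear_combination ((t1 - t2)/6) * sq3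
  have e2 : 2 * (w2 * ⟨(t0 - t1/2 - t2/2)/3, s*(t2 - t1)/6⟩).re = t2 + -(T/3) := by
    simp [w2, Complex.mul_re, hT]
    linear_combination ((t2 - t1)/6) * sq3
  rw [e0, e1, e2, Real.exp_add, Real.exp_add, Real.exp_add,
    Real.exp_log hu0, Real.exp_log hu1, Real.exp_log hu2]
  set c := Real.exp (-(T/3)) with hc
  have hcpos : 0 < c := Real.exp_pos _
  have hden : ((u0*c : ℝ) : ℂ) + ((u1*c : ℝ) : ℂ) + ((u2*c : ℝ) : ℂ) = ((c : ℝ) : ℂ) := by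
    push_cast
    have : u0 + u1 + u2 = 1 := by rw [hu0def, hu1def, hu2def]; ring
    have := congrArg (fun r : ℝ => ((r * c : ℝ) : ℂ)) this
    push_cast at this
    linear_combination this
  rw [hden, div_eq_iff (by exact_mod_cast ne_of_gt hcpos : ((c:ℝ):ℂ) ≠ 0)]
  apply Complex.ext
  · simp [w1, w2, Complex.mul_re, hu0def, hu1def, hu2def]
    ring_nf
    exact mul_comm _ _
  · simp [w1, w2, Complex.mul_im, hu0def, hu1def, hu2def]
    ring_nf
    linear_combination (y*c/3) * sq3

/-- The linear functional `v ↦ 2 Re(ζ v)`. -/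
noncomputable def fl (ζ : ℂ) : ℂ →ₗ[ℝ] ℝ where
  toFun v := 2 * (ζ * v).re
  map_add' a b := by simp [mul_add]
  map_smul' r a := by simp [Complex.real_smul, mul_comm, mul_left_comm]; ring

lemma fl_cont (ζ : ℂ) : Continuous (fl ζ) := by
  simp only [fl]
  fun_prop

lemma fl_surj (ζ : ℂ) (hζ : ζ ≠ 0) : Function.Surjective (fl ζ) := by
  intro r
  refine ⟨ζ⁻¹ * (r/2 : ℝ), ?_⟩
  show 2 * (ζ * (ζ⁻¹ * ((r/2:ℝ):ℂ))).re = r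
  rw [← mul_assoc, mul_inv_cancel₀ hζ, one_mul]
  simp
  ring

lemma int_half (ζ : ℂ) (hζ : ζ ≠ 0) :
    interior {v : ℂ | -1 ≤ 2 * (ζ * v).re} = {v : ℂ | -1 < 2 * (ζ * v).re} := by
  have hopen : IsOpenMap (fl ζ) := (fl ζ).isOpenMap_of_finiteDimensional (fl_surj ζ hζ)
  have h1 : {v : ℂ | -1 ≤ 2 * (ζ * v).re} = (fl ζ) ⁻¹' Set.Ici (-1) := rfl
  have h2 : {v : ℂ | -1 < 2 * (ζ * v).re} = (fl ζ) ⁻¹' Set.Ioi (-1) := rfl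
  rw [h1, h2, ← hopen.preimage_interior_eq_interior_preimage (fl_cont ζ), interior_Ici]

lemma convex_half (ζ : ℂ) : Convex ℝ {v : ℂ | -1 ≤ 2 * (ζ * v).re} :=
  convex_halfSpace_ge (LinearMap.isLinear (fl ζ)) (-1)

lemma setC_eq : {v : ℂ | ∀ ζ : ℂ, ζ ^ 3 = 1 → -1 ≤ 2 * (ζ * v).re} =
    {v : ℂ | -1 ≤ 2 * (1 * v).re} ∩ {v : ℂ | -1 ≤ 2 * (w1 * v).re} ∩
      {v : ℂ | -1 ≤ 2 * (w2 * v).re} := by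
  ext v
  simp only [Set.mem_setOf_eq, Set.mem_inter_iff]
  constructor
  · intro h
    exact ⟨⟨h 1 (by norm_num), h w1 ((cube_iff w1).2 (by tauto))⟩, h w2 ((cube_iff w2).2 (by tauto))⟩
  · rintro ⟨⟨ha, hb⟩, hc⟩ ζ hζ
    rcases (cube_iff ζ).1 hζ with rfl | rfl | rfl <;> assumption

lemma setS_eq : {v : ℂ | ∀ ζ : ℂ, ζ ^ 3 = 1 → -1 < 2 * (ζ * v).re} =
    {v : ℂ | -1 < 2 * (1 * v).re} ∩ {v : ℂ | -1 < 2 * (w1 * v).re} ∩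
      {v : ℂ | -1 < 2 * (w2 * v).re} := by
  ext v
  simp only [Set.mem_setOf_eq, Set.mem_inter_iff]
  constructor
  · intro h
    exact ⟨⟨h 1 (by norm_num), h w1 ((cube_iff w1).2 (by tauto))⟩, h w2 ((cube_iff w2).2 (by tauto))⟩
  · rintro ⟨⟨ha, hb⟩, hc⟩ ζ hζ
    rcases (cube_iff ζ).1 hζ with rfl | rfl | rfl <;> assumption

lemma hull_eq : convexHull ℝ {1, w1, w2} =
    {v : ℂ | ∀ ζ : ℂ, ζ ^ 3 = 1 → -1 ≤ 2 * (ζ * v).re} := by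
  apply le_antisymm
  · apply convexHull_min
    · rintro v (rfl | rfl | rfl) ζ hζ <;>
        rcases (cube_iff ζ).1 hζ with rfl | rfl | rfl <;>
          simp [w1, w2, Complex.mul_re] <;> nlinarith [sq3]
    · rw [setC_eq]
      exact ((convex_half 1).inter (convex_half w1)).inter (convex_half w2)
  · intro v hv
    simp only [Set.mem_setOf_eq] at hv
    have h1 : -1 ≤ 2 * v.re := by simpa using hv 1 (by norm_num)
    have h2 := hv w1 ((cube_iff w1).2 (by tauto))
    have h3 := hv w2 ((cube_iff w2).2 (by tauto))
    set s := Real.sqrt 3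
    set x := v.re
    set y := v.im
    have hx2 : (w1 * v).re = -x/2 - s/2 * y := by simp [w1, Complex.mul_re]; ring
    have hx3 : (w2 * v).re = -x/2 + s/2 * y := by simp [w2, Complex.mul_re]; ring
    set u : Fin 3 → ℝ := ![(1 + 2*x)/3, (1 - x + s*y)/3, (1 - x - s*y)/3] with hu
    have hw₀ : ∀ i ∈ Finset.univ, 0 ≤ u i := by
      intro i _
      fin_cases i <;> simp [hu]
      · linarith [h1]
      · rw [hx3] at h3; linarith [h3]
      · rw [hx2] at h2; linarith [h2]
    have hsum : ∑ i, u i = 1 := by simp [hu, Fin.sum_univ_three]; ring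
    have := Finset.centerMass_mem_convexHull (Finset.univ : Finset (Fin 3)) hw₀
      (by rw [hsum]; norm_num) (fun i _ => by fin_cases i <;> simp [Set.mem_insert_iff]
        : ∀ i ∈ Finset.univ, (![1, w1, w2] : Fin 3 → ℂ) i ∈ ({1, w1, w2} : Set ℂ))
    rw [Finset.centerMass_eq_of_sum_1 _ _ hsum, Fin.sum_univ_three] at this
    convert this using 2
    apply Complex.ext <;>
      simp [hu, w1, w2, Complex.ext_iff] <;> ring_nf
    · rfl
    change y = √3 * y * √3 * (1 / 3)
    linear_combination (-y/3) * sq3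

lemma w1_ne : w1 ≠ 0 := by
  simp [w1, Complex.ext_iff]

lemma w2_ne : w2 ≠ 0 := by
  simp [w2, Complex.ext_iff]

lemma exp_v1 : Complex.exp (2 * Real.pi * Complex.I / 3) = w1 := by
  have h : (2 * (Real.pi : ℂ) * Complex.I / 3) = ((2 * Real.pi / 3 : ℝ) : ℂ) * Complex.I := by
    push_cast; ring
  rw [h]
  apply Complex.ext
  · rw [Complex.exp_ofReal_mul_I_re]
    rw [show (2 * Real.pi / 3 : ℝ) = Real.pi - Real.pi / 3 by ring, Real.cos_pi_sub,
      Real.cos_pi_div_three]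
    simp [w1]
  · rw [Complex.exp_ofReal_mul_I_im]
    rw [show (2 * Real.pi / 3 : ℝ) = Real.pi - Real.pi / 3 by ring, Real.sin_pi_sub,
      Real.sin_pi_div_three]
    simp [w1]

lemma exp_v2 : Complex.exp (4 * Real.pi * Complex.I / 3) = w2 := by
  have h : (4 * (Real.pi : ℂ) * Complex.I / 3) = ((4 * Real.pi / 3 : ℝ) : ℂ) * Complex.I := by
    push_cast; ring
  rw [h]
  apply Complex.ext
  · rw [Complex.exp_ofReal_mul_I_re]
    rw [show (4 * Real.pi / 3 : ℝ) = Real.pi + Real.pi / 3 by ring, Real.cos_add,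
      Real.cos_pi_div_three, Real.sin_pi_div_three]
    simp [w2]
  · rw [Complex.exp_ofReal_mul_I_im]
    rw [show (4 * Real.pi / 3 : ℝ) = Real.pi + Real.pi / 3 by ring, Real.sin_add,
      Real.cos_pi_div_three, Real.sin_pi_div_three]
    simp [w2]

theorem stmt7 :
    Set.range titP = {v : ℂ | ∀ ζ : ℂ, ζ ^ 3 = 1 → -1 < 2 * (ζ * v).re} ∧
    {v : ℂ | ∀ ζ : ℂ, ζ ^ 3 = 1 → -1 < 2 * (ζ * v).re} =
      interior (convexHull ℝ
        {1, Complex.exp (2 * Real.pi * Complex.I / 3),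
          Complex.exp (4 * Real.pi * Complex.I / 3)}) := by
  constructor
  · ext v
    constructor
    · rintro ⟨z, rfl⟩ ζ hζ
      exact titP_mem z ζ hζ
    · intro hv
      have h1 : -1 < 2 * v.re := by simpa using hv 1 (by norm_num)
      have h2 := hv w1 ((cube_iff w1).2 (by tauto))
      have h3 := hv w2 ((cube_iff w2).2 (by tauto))
      exact titP_surj v h1 h2 h3
  · rw [exp_v1, exp_v2, hull_eq, setC_eq, interior_inter, interior_inter,
      int_half 1 one_ne_zero, int_half w1 w1_ne, int_half w2 w2_ne, setS_eq]
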